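/- Let κ ∈ (0,1). There exists a constant c > 0 such that for all 0 < s < t and all x, y ∈ ℝ, one has −|x−y|^{1+2κ} (∂²/∂t∂s) p_{t,s}(x,y) ≤ c ( |t−s|^{κ−2} s^{−1/2} + |t−s|^{κ−1} s^{−3/2} ), where p_{t,s}(x,y) = (2π)⁻¹ (s(t−s))^{−1/2} exp(−(x−y)²/(2(t−s)) − y²/(2s)). -/
import Mathlib

noncomputable section

open Real

/-- `p_{t,s}(x,y) = (2π)⁻¹ (s(t−s))^{−1/2} exp(−(x−y)²/(2(t−s)) − y²/(2s))`,
the joint density of a Brownian motion at times `s` and `t`. -/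
def pts (t s x y : ℝ) : ℝ :=
  (2 * Real.pi)⁻¹ * (Real.sqrt (s * (t - s)))⁻¹ *
    Real.exp (-(x - y) ^ 2 / (2 * (t - s)) - y ^ 2 / (2 * s))

/-- The explicit formula for the mixed partial derivative `(∂²/∂t∂s) p_{t,s}(x,y)`
(Lemma 3.3(i) of the paper). -/
def ptsD (t s x y : ℝ) : ℝ :=
  (1 / 4) * pts t s x y * (y ^ 2 / s ^ 2 - 1 / s) *
      ((y - x) ^ 2 / (t - s) ^ 2 - 1 / (t - s))
    - (1 / 4) * pts t s x y * ((y - x) ^ 2 / (t - s) ^ 2 - 1 / (t - s)) ^ 2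
    + (1 / 2) * pts t s x y * (2 * (y - x) ^ 2 / (t - s) ^ 3 - 1 / (t - s) ^ 2)

private lemma key1 (z r : ℝ) (hz : 0 ≤ z) (hr0 : 0 ≤ r) (hr4 : r ≤ 4) :
    z ^ r * Real.exp (-z) ≤ 256 := by
  rcases le_or_gt z 1 with h | h
  · have h1 : z ^ r ≤ 1 := Real.rpow_le_one hz h hr0
    have h2 : Real.exp (-z) ≤ 1 := Real.exp_le_one_iff.mpr (by linarith)
    have h3 : 0 ≤ z ^ r := Real.rpow_nonneg hz r
    nlinarith [Real.exp_pos (-z)]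
  · have hz1 : (1:ℝ) ≤ z := h.le
    have h1 : z ^ r ≤ z ^ (4:ℝ) := Real.rpow_le_rpow_of_exponent_le hz1 hr4
    have h4 : z ^ (4:ℝ) = z ^ (4:ℕ) := by
      rw [← Real.rpow_natCast z 4]; norm_num
    have he : z/4 + 1 ≤ Real.exp (z/4) := Real.add_one_le_exp _
    have hq : Real.exp z = (Real.exp (z/4)) ^ (4:ℕ) := by
      rw [← Real.exp_nat_mul]; norm_num; ring_nf
    have h7 : (z/4) ^ (4:ℕ) ≤ (Real.exp (z/4)) ^ (4:ℕ) :=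
      pow_le_pow_left₀ (by positivity) (by linarith) 4
    have hz4 : z ^ (4:ℕ) ≤ 256 * Real.exp z := by
      rw [hq]
      have : z ^ (4:ℕ) = 256 * ((z/4) ^ (4:ℕ)) := by ring
      linarith
    have hep : (0:ℝ) < Real.exp z := Real.exp_pos z
    have hen : Real.exp (-z) = (Real.exp z)⁻¹ := Real.exp_neg z
    have h5 : z ^ r * Real.exp (-z) ≤ z ^ (4:ℕ) * Real.exp (-z) := by
      have hnn : (0:ℝ) ≤ Real.exp (-z) := (Real.exp_pos _).le
      rw [← h4]; exact mul_le_mul_of_nonneg_right h1 hnn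
    have h6 : z ^ (4:ℕ) * Real.exp (-z) ≤ 256 := by
      rw [hen, ← div_eq_mul_inv, div_le_iff₀ hep]
      linarith
    linarith

private lemma key3 (s w : ℝ) (hs : 0 < s) :
    w ^ 2 * Real.exp (-(w ^ 2) / (2 * s)) ≤ 2 * s := by
  have h1 : w^2/(2*s) * Real.exp (-(w^2/(2*s))) ≤ 1 := by
    set z := w^2/(2*s) with hz
    have hz0 : 0 ≤ z := by rw [hz]; positivity
    have he : z + 1 ≤ Real.exp z := Real.add_one_le_exp z
    have hA : Real.exp (-z) * (z + 1) ≤ Real.exp (-z) * Real.exp z :=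
      mul_le_mul_of_nonneg_left he (Real.exp_pos _).le
    have hmul : Real.exp (-z) * Real.exp z = 1 := by
      rw [← Real.exp_add]; simp
    have hE' : (0:ℝ) < Real.exp (-z) := Real.exp_pos _
    nlinarith
  have harg : -(w^2)/(2*s) = -(w^2/(2*s)) := by ring
  rw [harg]
  calc w^2 * Real.exp (-(w^2/(2*s)))
      = (2*s) * (w^2/(2*s) * Real.exp (-(w^2/(2*s)))) := by field_simp
    _ ≤ (2*s) * 1 := mul_le_mul_of_nonneg_left h1 (by positivity)
    _ = 2*s := by ring

private lemma key2 (κ u a : ℝ) (hκ0 : 0 < κ) (hκ1 : κ < 1) (hu : 0 < u) (ha : 0 ≤ a)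
    (k : ℕ) (hk : k ≤ 2) :
    a ^ (1 + 2*κ) * (a ^ 2) ^ k * Real.exp (-(a ^ 2) / (2 * u)) ≤
      4096 * u ^ ((1 + 2*κ)/2 + k) := by
  have hrhs : 0 ≤ 4096 * u ^ ((1 + 2*κ)/2 + (k:ℝ)) :=
    mul_nonneg (by norm_num) (Real.rpow_nonneg hu.le _)
  rcases eq_or_lt_of_le ha with h0 | h0
  · rw [← h0, Real.zero_rpow (by positivity : (1:ℝ) + 2*κ ≠ 0)]
    simpa using hrhs
  · set r : ℝ := (1 + 2*κ)/2 + k with hr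
    have hk' : (k:ℝ) ≤ 2 := by exact_mod_cast hk
    have hr0 : 0 ≤ r := by rw [hr]; positivity
    have hr4 : r ≤ 4 := by rw [hr]; linarith
    set z : ℝ := a ^ 2 / (2*u) with hzdef
    have hz0 : 0 < z := by rw [hzdef]; positivity
    have ha2z : a ^ 2 = (2*u) * z := by rw [hzdef]; field_simp
    have hap : (0:ℝ) < a ^ 2 := by positivity
    have e1 : a ^ (1 + 2*κ) * (a ^ 2) ^ k = (a ^ 2) ^ r := by
      rw [hr, Real.rpow_add hap, Real.rpow_natCast]
      congr 1
      rw [← Real.rpow_natCast a 2, ← Real.rpow_mul ha]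
      congr 1
      push_cast
      ring
    have e2 : (a ^ 2) ^ r = 2 ^ r * u ^ r * z ^ r := by
      rw [ha2z, Real.mul_rpow (by positivity) hz0.le, Real.mul_rpow (by norm_num) hu.le]
    have e3 : -(a ^ 2) / (2 * u) = -z := by rw [hzdef]; field_simp
    have h2r : (2:ℝ) ^ r ≤ 16 := by
      have h24 : (2:ℝ) ^ r ≤ (2:ℝ) ^ (4:ℝ) := Real.rpow_le_rpow_of_exponent_le one_le_two hr4
      have h16 : (2:ℝ) ^ (4:ℝ) = 16 := by
        rw [show (4:ℝ) = ((4:ℕ):ℝ) by norm_num, Real.rpow_natCast]; norm_num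
      linarith
    have hkey := key1 z r hz0.le hr0 hr4
    have h1 : 0 ≤ u ^ r := Real.rpow_nonneg hu.le r
    have h2 : 0 ≤ z ^ r * Real.exp (-z) :=
      mul_nonneg (Real.rpow_nonneg hz0.le r) (Real.exp_pos _).le
    calc a ^ (1 + 2*κ) * (a ^ 2) ^ k * Real.exp (-(a ^ 2) / (2 * u))
        = (2 ^ r * (z ^ r * Real.exp (-z))) * u ^ r := by rw [e1, e2, e3]; ring
      _ ≤ (16 * 256) * u ^ r :=
          mul_le_mul_of_nonneg_right (mul_le_mul h2r hkey h2 (by norm_num)) h1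
      _ = 4096 * u ^ r := by ring

set_option maxHeartbeats 2000000 in
/-- Let `κ ∈ (0,1)`. There is a constant `c > 0` such that for all
`0 < s < t` and all `x, y ∈ ℝ`,
`−|x−y|^{1+2κ} (∂²/∂t∂s) p_{t,s}(x,y) ≤ c (|t−s|^{κ−2} s^{−1/2} + |t−s|^{κ−1} s^{−3/2})`. -/
theorem statement9 (κ : ℝ) (hκ : κ ∈ Set.Ioo (0:ℝ) 1) :
    ∃ c : ℝ, 0 < c ∧ ∀ s t x y : ℝ, 0 < s → s < t →
      -(|x - y| ^ (1 + 2 * κ)) * ptsD t s x y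
        ≤ c * (|t - s| ^ (κ - 2) * s ^ (-(1/2) : ℝ)
             + |t - s| ^ (κ - 1) * s ^ (-(3/2) : ℝ)) := by
  obtain ⟨hκ0, hκ1⟩ := hκ
  refine ⟨100000, by norm_num, fun s t x y hs hst => ?_⟩
  set u : ℝ := t - s with hu_def
  have hu : 0 < u := by rw [hu_def]; linarith
  rw [abs_of_pos hu]
  set a : ℝ := |x - y| with ha_def
  have ha : 0 ≤ a := abs_nonneg _
  have ha2 : (x - y) ^ 2 = a ^ 2 := (sq_abs _).symm
  have ha2' : (y - x) ^ 2 = a ^ 2 := by rw [← ha2]; ring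
  have hapow : 0 ≤ a ^ (1 + 2*κ) := Real.rpow_nonneg ha _
  set Ea : ℝ := Real.exp (-(a ^ 2) / (2 * u)) with hEa
  set Ew : ℝ := Real.exp (-(y ^ 2) / (2 * s)) with hEw
  have hEa0 : 0 < Ea := Real.exp_pos _
  have hEw0 : 0 < Ew := Real.exp_pos _
  have hEw1 : Ew ≤ 1 := by
    rw [hEw]
    apply Real.exp_le_one_iff.mpr
    have h1 : 0 ≤ y^2/(2*s) := by positivity
    have h2 : -(y^2)/(2*s) = -(y^2/(2*s)) := by ring
    rw [h2]; linarith
  set P : ℝ := pts t s x y with hPdef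
  -- express pts in rpow form
  have hsqrt : (Real.sqrt (s * u))⁻¹ = s ^ (-(1/2):ℝ) * u ^ (-(1/2):ℝ) := by
    rw [Real.sqrt_eq_rpow, ← Real.rpow_neg (by positivity : (0:ℝ) ≤ s*u),
      Real.mul_rpow hs.le hu.le]
  have hexp : Real.exp (-(x - y) ^ 2 / (2 * u) - y ^ 2 / (2 * s)) = Ea * Ew := by
    rw [hEa, hEw, ← Real.exp_add]
    congr 1
    rw [ha2]; ring
  have hpts : P = (2*Real.pi)⁻¹ * (s ^ (-(1/2):ℝ) * u ^ (-(1/2):ℝ)) * (Ea * Ew) := by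
    rw [hPdef]
    unfold pts
    rw [← hu_def, hsqrt, hexp]
  have hP0 : 0 ≤ P := by
    rw [hpts]
    exact mul_nonneg (mul_nonneg (by positivity)
      (mul_nonneg (Real.rpow_nonneg hs.le _) (Real.rpow_nonneg hu.le _)))
      (mul_nonneg hEa0.le hEw0.le)
  -- Step 1: bound -ptsD by positive-part expression Q
  set Q : ℝ := (1/4)*P*(y^2/s^2 + 1/s)*(a^2/u^2 + 1/u)
      + (1/4)*P*(a^2/u^2 + 1/u)^2 + (1/2)*P*(2*a^2/u^3 + 1/u^2) with hQdef
  clear_value Q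
  clear_value u a Ea Ew P
  have hQD : Q + ptsD t s x y
      = P * (y^2*a^2/(2*(s^2*u^2)) + 1/(2*(s*u)) + 3*a^2/u^3) := by
    rw [hQdef]
    unfold ptsD
    rw [← hu_def, ← hPdef, ha2']
    ring
  have hstep1 : -(a ^ (1 + 2*κ)) * ptsD t s x y ≤ a ^ (1 + 2*κ) * Q := by
    have hQ0 : 0 ≤ P * (y^2*a^2/(2*(s^2*u^2)) + 1/(2*(s*u)) + 3*a^2/u^3) :=
      mul_nonneg hP0 (by positivity)
    have hnegD : -(ptsD t s x y) ≤ Q := by linarith only [hQD, hQ0]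
    calc -(a ^ (1 + 2*κ)) * ptsD t s x y = a ^ (1 + 2*κ) * (-(ptsD t s x y)) := by ring
      _ ≤ a ^ (1 + 2*κ) * Q := mul_le_mul_of_nonneg_left hnegD hapow
  -- key2 specializations
  have k20 : a^(1+2*κ) * Ea ≤ 4096 * u ^ ((1+2*κ)/2) := by
    have h := key2 κ u a hκ0 hκ1 hu ha 0 (by norm_num)
    rw [← hEa] at h
    simpa using h
  have k21 : a^(1+2*κ) * a^2 * Ea ≤ 4096 * u ^ ((1+2*κ)/2 + 1) := by
    have h := key2 κ u a hκ0 hκ1 hu ha 1 (by norm_num)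
    rw [← hEa] at h
    simpa using h
  have k22 : a^(1+2*κ) * (a^2)^2 * Ea ≤ 4096 * u ^ ((1+2*κ)/2 + 2) := by
    have h := key2 κ u a hκ0 hκ1 hu ha 2 (by norm_num)
    rw [← hEa] at h
    push_cast at h
    exact h
  -- division helper
  have hd : ∀ (c r : ℝ) (n : ℕ), (c * u ^ r) / u ^ n = c * u ^ (r - n) := by
    intro c r n
    rw [mul_div_assoc, ← Real.rpow_natCast u n, ← Real.rpow_sub hu]
  have hu2 : (0:ℝ) < u^2 := pow_pos hu 2
  have hu3 : (0:ℝ) < u^3 := pow_pos hu 3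
  have hu4 : (0:ℝ) < u^4 := pow_pos hu 4
  have hu1 : (0:ℝ) < u^1 := pow_pos hu 1
  -- H1
  have H1 : Ew * (y^2/s^2 + 1/s) ≤ 3/s := by
    have k3 : y^2 * Ew ≤ 2*s := by
      have h := key3 s y hs
      rw [← hEw] at h
      exact h
    have e : Ew * (y^2/s^2 + 1/s) = (y^2*Ew)/s^2 + Ew/s := by ring
    have b1 : (y^2*Ew)/s^2 ≤ (2*s)/s^2 := by
      apply div_le_div_of_nonneg_right k3 (pow_pos hs 2).le
    have b2 : Ew/s ≤ 1/s := by
      apply div_le_div_of_nonneg_right hEw1 hs.le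
    have e2 : (2*s)/s^2 + 1/s = 3/s := by
      field_simp
      ring
    rw [e]; linarith only [b1, b2, e2]
  -- H2
  have H2 : a^(1+2*κ) * Ea * (a^2/u^2 + 1/u) ≤ 8192 * u ^ (κ - 1/2) := by
    have e : a^(1+2*κ) * Ea * (a^2/u^2 + 1/u)
        = (a^(1+2*κ) * a^2 * Ea) / u^2 + (a^(1+2*κ) * Ea) / u^1 := by ring
    have b1 : (a^(1+2*κ) * a^2 * Ea) / u^2 ≤ (4096 * u^((1+2*κ)/2 + 1)) / u^2 :=
      div_le_div_of_nonneg_right k21 hu2.le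
    have b2 : (a^(1+2*κ) * Ea) / u^1 ≤ (4096 * u^((1+2*κ)/2)) / u^1 :=
      div_le_div_of_nonneg_right k20 hu1.le
    rw [hd 4096 ((1+2*κ)/2 + 1) 2] at b1
    rw [hd 4096 ((1+2*κ)/2) 1] at b2
    rw [show ((1+2*κ)/2 + 1 - ((2:ℕ):ℝ)) = κ - 1/2 by push_cast; ring] at b1
    rw [show ((1+2*κ)/2 - ((1:ℕ):ℝ)) = κ - 1/2 by push_cast; ring] at b2
    rw [e]; linarith only [b1, b2]
  -- H3
  have H3 : a^(1+2*κ) * Ea * (a^2/u^2 + 1/u)^2 ≤ 16384 * u ^ (κ - 3/2) := by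
    have e : a^(1+2*κ) * Ea * (a^2/u^2 + 1/u)^2
        = (a^(1+2*κ) * (a^2)^2 * Ea) / u^4 + 2*((a^(1+2*κ) * a^2 * Ea) / u^3)
          + (a^(1+2*κ) * Ea) / u^2 := by ring
    have b1 : (a^(1+2*κ) * (a^2)^2 * Ea) / u^4 ≤ (4096 * u^((1+2*κ)/2 + 2)) / u^4 :=
      div_le_div_of_nonneg_right k22 hu4.le
    have b2 : (a^(1+2*κ) * a^2 * Ea) / u^3 ≤ (4096 * u^((1+2*κ)/2 + 1)) / u^3 :=
      div_le_div_of_nonneg_right k21 hu3.le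
    have b3 : (a^(1+2*κ) * Ea) / u^2 ≤ (4096 * u^((1+2*κ)/2)) / u^2 :=
      div_le_div_of_nonneg_right k20 hu2.le
    rw [hd 4096 ((1+2*κ)/2 + 2) 4] at b1
    rw [hd 4096 ((1+2*κ)/2 + 1) 3] at b2
    rw [hd 4096 ((1+2*κ)/2) 2] at b3
    rw [show ((1+2*κ)/2 + 2 - ((4:ℕ):ℝ)) = κ - 3/2 by push_cast; ring] at b1
    rw [show ((1+2*κ)/2 + 1 - ((3:ℕ):ℝ)) = κ - 3/2 by push_cast; ring] at b2
    rw [show ((1+2*κ)/2 - ((2:ℕ):ℝ)) = κ - 3/2 by push_cast; ring] at b3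
    rw [e]; linarith only [b1, b2, b3]
  -- H4
  have H4 : a^(1+2*κ) * Ea * (2*a^2/u^3 + 1/u^2) ≤ 12288 * u ^ (κ - 3/2) := by
    have e : a^(1+2*κ) * Ea * (2*a^2/u^3 + 1/u^2)
        = 2*((a^(1+2*κ) * a^2 * Ea) / u^3) + (a^(1+2*κ) * Ea) / u^2 := by ring
    have b2 : (a^(1+2*κ) * a^2 * Ea) / u^3 ≤ (4096 * u^((1+2*κ)/2 + 1)) / u^3 :=
      div_le_div_of_nonneg_right k21 hu3.le
    have b3 : (a^(1+2*κ) * Ea) / u^2 ≤ (4096 * u^((1+2*κ)/2)) / u^2 :=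
      div_le_div_of_nonneg_right k20 hu2.le
    rw [hd 4096 ((1+2*κ)/2 + 1) 3] at b2
    rw [hd 4096 ((1+2*κ)/2) 2] at b3
    rw [show ((1+2*κ)/2 + 1 - ((3:ℕ):ℝ)) = κ - 3/2 by push_cast; ring] at b2
    rw [show ((1+2*κ)/2 - ((2:ℕ):ℝ)) = κ - 3/2 by push_cast; ring] at b3
    rw [e]; linarith only [b2, b3]
  -- Step 2: split and bound
  have hsplit : a^(1 + 2*κ) * Q = (2*Real.pi)⁻¹ * (s ^ (-(1/2):ℝ) * u ^ (-(1/2):ℝ)) *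
      ((1/4) * (Ew * (y^2/s^2 + 1/s)) * (a^(1+2*κ) * Ea * (a^2/u^2 + 1/u))
       + (1/4) * (a^(1+2*κ) * Ea * (a^2/u^2 + 1/u)^2) * Ew
       + (1/2) * (a^(1+2*κ) * Ea * (2*a^2/u^3 + 1/u^2)) * Ew) := by
    rw [hQdef, hpts]; ring
  have hY1 : 0 ≤ a^(1+2*κ) * Ea * (a^2/u^2 + 1/u) :=
    mul_nonneg (mul_nonneg hapow hEa0.le) (by positivity)
  have hupow1 : 0 ≤ (8192:ℝ) * u ^ (κ - 1/2) :=
    mul_nonneg (by norm_num) (Real.rpow_nonneg hu.le _)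
  have hupow2 : 0 ≤ (16384:ℝ) * u ^ (κ - 3/2) :=
    mul_nonneg (by norm_num) (Real.rpow_nonneg hu.le _)
  have hupow3 : 0 ≤ (12288:ℝ) * u ^ (κ - 3/2) :=
    mul_nonneg (by norm_num) (Real.rpow_nonneg hu.le _)
  have t1 : (Ew * (y^2/s^2 + 1/s)) * (a^(1+2*κ) * Ea * (a^2/u^2 + 1/u))
      ≤ (3/s) * (8192 * u ^ (κ - 1/2)) :=
    mul_le_mul H1 H2 hY1 (by positivity)
  have t2 : (a^(1+2*κ) * Ea * (a^2/u^2 + 1/u)^2) * Ew ≤ (16384 * u ^ (κ - 3/2)) * 1 :=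
    mul_le_mul H3 hEw1 hEw0.le hupow2
  have t3 : (a^(1+2*κ) * Ea * (2*a^2/u^3 + 1/u^2)) * Ew ≤ (12288 * u ^ (κ - 3/2)) * 1 :=
    mul_le_mul H4 hEw1 hEw0.le hupow3
  have hinner : (1/4) * (Ew * (y^2/s^2 + 1/s)) * (a^(1+2*κ) * Ea * (a^2/u^2 + 1/u))
       + (1/4) * (a^(1+2*κ) * Ea * (a^2/u^2 + 1/u)^2) * Ew
       + (1/2) * (a^(1+2*κ) * Ea * (2*a^2/u^3 + 1/u^2)) * Ew
      ≤ (1/4) * ((3/s) * (8192 * u ^ (κ - 1/2)))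
       + (1/4) * (16384 * u ^ (κ - 3/2)) + (1/2) * (12288 * u ^ (κ - 3/2)) := by
    linarith only [t1, t2, t3]
  have hCS : 0 ≤ (2*Real.pi)⁻¹ * (s ^ (-(1/2):ℝ) * u ^ (-(1/2):ℝ)) :=
    mul_nonneg (by positivity)
      (mul_nonneg (Real.rpow_nonneg hs.le _) (Real.rpow_nonneg hu.le _))
  have hstep2 : a^(1 + 2*κ) * Q ≤ (2*Real.pi)⁻¹ * (s ^ (-(1/2):ℝ) * u ^ (-(1/2):ℝ)) *
      ((1/4) * ((3/s) * (8192 * u ^ (κ - 1/2)))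
       + (1/4) * (16384 * u ^ (κ - 3/2)) + (1/2) * (12288 * u ^ (κ - 3/2))) := by
    rw [hsplit]
    exact mul_le_mul_of_nonneg_left hinner hCS
  -- final arithmetic
  have m1 : s ^ (-(1/2):ℝ) * s⁻¹ = s ^ (-(3/2):ℝ) := by
    rw [show (s⁻¹ : ℝ) = s ^ (-1:ℝ) from (Real.rpow_neg_one s).symm, ← Real.rpow_add hs]
    norm_num
  have m2 : u ^ (-(1/2):ℝ) * u ^ (κ - 1/2) = u ^ (κ - 1) := by
    rw [← Real.rpow_add hu]
    congr 1; ring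
  have m3 : u ^ (-(1/2):ℝ) * u ^ (κ - 3/2) = u ^ (κ - 2) := by
    rw [← Real.rpow_add hu]
    congr 1; ring
  have hlast : (2*Real.pi)⁻¹ * (s ^ (-(1/2):ℝ) * u ^ (-(1/2):ℝ)) *
      ((1/4) * ((3/s) * (8192 * u ^ (κ - 1/2)))
       + (1/4) * (16384 * u ^ (κ - 3/2)) + (1/2) * (12288 * u ^ (κ - 3/2)))
      ≤ 100000 * (u ^ (κ - 2) * s ^ (-(1/2):ℝ) + u ^ (κ - 1) * s ^ (-(3/2):ℝ)) := by
    have expand : (2*Real.pi)⁻¹ * (s ^ (-(1/2):ℝ) * u ^ (-(1/2):ℝ)) *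
        ((1/4) * ((3/s) * (8192 * u ^ (κ - 1/2)))
         + (1/4) * (16384 * u ^ (κ - 3/2)) + (1/2) * (12288 * u ^ (κ - 3/2)))
        = (2*Real.pi)⁻¹ * (6144 * ((s ^ (-(1/2):ℝ) * s⁻¹) * (u ^ (-(1/2):ℝ) * u ^ (κ - 1/2)))
          + 10240 * (s ^ (-(1/2):ℝ) * (u ^ (-(1/2):ℝ) * u ^ (κ - 3/2)))) := by
      ring
    rw [expand, m1, m2, m3]
    have hpi : (2*Real.pi)⁻¹ ≤ 1 := by
      have h2pi : (1:ℝ) ≤ 2*Real.pi := by linarith [Real.pi_gt_three]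
      exact inv_le_one_of_one_le₀ h2pi
    have hX : 0 ≤ s ^ (-(3/2):ℝ) * u ^ (κ - 1) :=
      mul_nonneg (Real.rpow_nonneg hs.le _) (Real.rpow_nonneg hu.le _)
    have hY : 0 ≤ s ^ (-(1/2):ℝ) * u ^ (κ - 2) :=
      mul_nonneg (Real.rpow_nonneg hs.le _) (Real.rpow_nonneg hu.le _)
    have hkey := mul_le_mul_of_nonneg_right hpi
      (show (0:ℝ) ≤ 6144 * (s ^ (-(3/2):ℝ) * u ^ (κ - 1))
          + 10240 * (s ^ (-(1/2):ℝ) * u ^ (κ - 2)) by positivity)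
    linarith only [hkey, hX, hY]
  linarith only [hstep1, hstep2, hlast]

end
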